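/- Let n ≥ 2, let λ₁,…,λₙ > 1, let φ ∈ (0, π/2], set t₀ = 1 and t_j = λ₁⋯λ_j for 1 ≤ j ≤ n, and define x_j = t_j·e^{iφ} ∈ ℍ². For 0 ≤ x ≤ y define g_φ(x,y) = (y−x) + √((y−x)² + 4xy·sin²(φ)). Then τ(x₀,…,xₙ) = 2·log( [Π_{j=0}^{n−2} g_φ(t_j, t_{j+2})] / [g_φ(t₀, tₙ)·Π_{j=1}^{n−2} g_φ(t_j, t_{j+1})] ). -/

import Mathlib

open UpperHalfPlane Real Filter

/-- The tension of the chain `x 0, x 1, …, x n`: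
`τ = Σ_{j=1}^{n−1} d(x_{j−1},x_{j+1}) − Σ_{j=2}^{n−1} d(x_{j−1},x_j) − d(x_0,x_n)`. -/
noncomputable def tension (n : ℕ) (x : ℕ → UpperHalfPlane) : ℝ :=
  (∑ j ∈ Finset.range (n - 1), dist (x j) (x (j + 2)))
    - (∑ j ∈ Finset.range (n - 2), dist (x (j + 1)) (x (j + 2)))
    - dist (x 0) (x n)

/-- The Gromov product `⟨x,y⟩_z = (d(x,z)+d(z,y)−d(x,y))/2`. -/
noncomputable def gromov (x y z : UpperHalfPlane) : ℝ :=
  (dist x z + dist z y - dist x y) / 2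

/-- A pair `(a,b)` is good if `a, b ≥ 0` and `sinh(a−b) > 2·sinh(a/2)`. -/
def GoodPair (a b : ℝ) : Prop :=
  0 ≤ a ∧ 0 ≤ b ∧ Real.sinh (a - b) > 2 * Real.sinh (a / 2)

/-- The chain `x 0, …, x n` is `(a,b)`-good. -/
def GoodChain (a b : ℝ) (n : ℕ) (x : ℕ → UpperHalfPlane) : Prop :=
  (∀ j < n, dist (x (j + 1)) (x j) ≥ a) ∧
  (∀ j, 1 ≤ j → j + 1 ≤ n → gromov (x (j - 1)) (x (j + 1)) (x j) ≤ b)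

/-- `g_φ(x,y) = (y−x) + √((y−x)² + 4xy·sin²(φ))`. -/
noncomputable def gfun (φ x y : ℝ) : ℝ :=
  (y - x) + Real.sqrt ((y - x) ^ 2 + 4 * x * y * Real.sin φ ^ 2)


lemma gfun_pos {φ s r : ℝ} (hφ : 0 < Real.sin φ) (hs : 0 < s) (hr : 0 < r) :
    0 < gfun φ s r := by
  unfold gfun
  have h4 : 0 < 4 * s * r * Real.sin φ ^ 2 := by positivity
  have h1 : |r - s| < Real.sqrt ((r - s) ^ 2 + 4 * s * r * Real.sin φ ^ 2) := by
    rw [← Real.sqrt_sq_eq_abs]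
    exact Real.sqrt_lt_sqrt (sq_nonneg _) (by linarith)
  have h2 : -(r - s) ≤ |r - s| := neg_le_abs _
  linarith

lemma dist_formula {φ s r : ℝ} (hφ : 0 < Real.sin φ) (hs : 0 < s) (hsr : s ≤ r)
    (z w : UpperHalfPlane) (hz : (z : ℂ) = (s : ℂ) * Complex.exp (φ * Complex.I))
    (hw : (w : ℂ) = (r : ℂ) * Complex.exp (φ * Complex.I)) :
    dist z w = 2 * Real.log (gfun φ s r) - Real.log s - Real.log r
      - 2 * Real.log (2 * Real.sin φ) := by
  have hr : 0 < r := lt_of_lt_of_le hs hsr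
  have hzim : z.im = s * Real.sin φ := by
    have := congrArg Complex.im hz
    simpa [UpperHalfPlane.coe_im, Complex.exp_mul_I, Complex.add_im, Complex.mul_im, Complex.sin_ofReal_re] using this
  have hwim : w.im = r * Real.sin φ := by
    have := congrArg Complex.im hw
    simpa [UpperHalfPlane.coe_im, Complex.exp_mul_I, Complex.add_im, Complex.mul_im, Complex.sin_ofReal_re] using this
  have hdc : dist (z : ℂ) (w : ℂ) = r - s := by
    rw [Complex.dist_eq, hz, hw, ← sub_mul, norm_mul, Complex.norm_exp]
    have : ‖(s : ℂ) - r‖ = r - s := by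
      rw [← Complex.ofReal_sub, Complex.norm_real, Real.norm_eq_abs, abs_of_nonpos (by linarith)]; ring
    rw [this]
    simp
  have hsqrt : Real.sqrt (z.im * w.im) = Real.sqrt (s * r) * Real.sin φ := by
    rw [hzim, hwim]
    rw [show s * Real.sin φ * (r * Real.sin φ) = (s * r) * Real.sin φ ^ 2 by ring,
      Real.sqrt_mul (by positivity), Real.sqrt_sq hφ.le]
  rw [UpperHalfPlane.dist_eq, hdc, hsqrt]
  set c : ℝ := 2 * (Real.sqrt (s * r) * Real.sin φ) with hc
  have hcpos : 0 < c := by positivity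
  have harg : (r - s) / c + Real.sqrt (1 + ((r - s) / c) ^ 2) = gfun φ s r / c := by
    have hc2 : c ^ 2 = 4 * s * r * Real.sin φ ^ 2 := by
      rw [hc]; rw [mul_pow, mul_pow, Real.sq_sqrt (by positivity)]; ring
    have : Real.sqrt (1 + ((r - s) / c) ^ 2)
        = Real.sqrt ((r - s) ^ 2 + 4 * s * r * Real.sin φ ^ 2) / c := by
      rw [eq_div_iff hcpos.ne', ← Real.sqrt_sq hcpos.le, ← Real.sqrt_mul (by positivity)]
      congr 1
      field_simp
      rw [Real.sq_sqrt (sq_nonneg c), hc2]; ring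
    rw [this, gfun, add_div]
  rw [Real.arsinh, harg, Real.log_div (gfun_pos hφ hs hr).ne' hcpos.ne']
  have hlc : Real.log c = Real.log (2 * Real.sin φ) + (Real.log s + Real.log r) / 2 := by
    rw [hc, show 2 * (Real.sqrt (s*r) * Real.sin φ) = (2 * Real.sin φ) * Real.sqrt (s*r) by ring,
      Real.log_mul (by positivity) (by positivity), Real.log_sqrt (by positivity),
      Real.log_mul hs.ne' hr.ne']
  rw [hlc]; ring

lemma prod_shift (m : ℕ) (f : ℕ → ℝ) :
    ∏ j ∈ Finset.Icc 1 m, f j = ∏ j ∈ Finset.range m, f (j + 1) := by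
  induction m with
  | zero => simp
  | succ k ih =>
      rw [Finset.prod_Icc_succ_top (Nat.succ_le_succ (Nat.zero_le k)), ih,
        Finset.prod_range_succ]

lemma sum_expand (s : Finset ℕ) (f g h : ℕ → ℝ) (c : ℝ) :
    ∑ j ∈ s, (2 * f j - g j - h j - c)
      = 2 * ∑ j ∈ s, f j - ∑ j ∈ s, g j - ∑ j ∈ s, h j - s.card * c := by
  rw [Finset.sum_sub_distrib, Finset.sum_sub_distrib, Finset.sum_sub_distrib,
    Finset.mul_sum, Finset.sum_const, nsmul_eq_mul]

/-- Explicit formula -/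
theorem tension_formula (n : ℕ) (hn : 2 ≤ n) (lam : ℕ → ℝ)
    (hlam : ∀ j, 1 ≤ j → j ≤ n → 1 < lam j)
    (φ : ℝ) (hφ1 : 0 < φ) (hφ2 : φ ≤ π / 2)
    (t : ℕ → ℝ) (ht : ∀ j, t j = ∏ i ∈ Finset.Icc 1 j, lam i)
    (x : ℕ → UpperHalfPlane)
    (hx : ∀ j ≤ n, ((x j : ℂ)) = ((t j : ℝ) : ℂ) * Complex.exp (φ * Complex.I)) :
    tension n x = 2 * Real.log
      ((∏ j ∈ Finset.range (n - 1), gfun φ (t j) (t (j + 2))) /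
        (gfun φ (t 0) (t n) * ∏ j ∈ Finset.Icc 1 (n - 2), gfun φ (t j) (t (j + 1)))) := by
  have hsin : 0 < Real.sin φ := by
    apply Real.sin_pos_of_pos_of_lt_pi hφ1
    have := Real.pi_pos
    linarith
  have htpos : ∀ j, j ≤ n → 0 < t j := by
    intro j hj
    rw [ht]
    apply Finset.prod_pos
    intro i hi
    rw [Finset.mem_Icc] at hi
    exact lt_trans one_pos (hlam i hi.1 (hi.2.trans hj))
  have htmono : ∀ j k, j ≤ k → k ≤ n → t j ≤ t k := by
    intro j k hjk hk
    have hik : Finset.Icc 1 j = Finset.Ioc 0 j := Finset.Icc_add_one_left_eq_Ioc 0 j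
    have hik' : Finset.Icc 1 k = Finset.Ioc 0 k := Finset.Icc_add_one_left_eq_Ioc 0 k
    rw [ht, ht, hik, hik', ← Finset.prod_Ioc_consecutive lam (Nat.zero_le j) hjk]
    have h1 : (1 : ℝ) ≤ ∏ i ∈ Finset.Ioc j k, lam i := by
      calc (1:ℝ) = ∏ _i ∈ Finset.Ioc j k, (1:ℝ) := Finset.prod_const_one.symm
        _ ≤ _ := Finset.prod_le_prod (fun _ _ => zero_le_one) (fun i hi => by
            rw [Finset.mem_Ioc] at hi
            exact le_of_lt (hlam i (Nat.one_le_iff_ne_zero.2 (by omega)) (hi.2.trans hk)))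
    have h0 : 0 < ∏ i ∈ Finset.Ioc 0 j, lam i := by
      apply Finset.prod_pos
      intro i hi
      rw [Finset.mem_Ioc] at hi
      exact lt_trans one_pos (hlam i hi.1 (le_trans (hi.2.trans hjk) hk))
    nlinarith
  have hd : ∀ j k, j ≤ k → k ≤ n →
      dist (x j) (x k) = 2 * Real.log (gfun φ (t j) (t k)) - Real.log (t j)
        - Real.log (t k) - 2 * Real.log (2 * Real.sin φ) := by
    intro j k hjk hk
    exact dist_formula hsin (htpos j (hjk.trans hk)) (htmono j k hjk hk)
      (x j) (x k) (hx j (hjk.trans hk)) (hx k hk)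
  obtain ⟨m, rfl⟩ : ∃ m, n = m + 2 := ⟨n - 2, by omega⟩
  simp only [show m + 2 - 1 = m + 1 from rfl, show m + 2 - 2 = m from rfl] at *
  have hgpos : ∀ j k, j ≤ m + 2 → k ≤ m + 2 → 0 < gfun φ (t j) (t k) := fun j k hj hk =>
    gfun_pos hsin (htpos j hj) (htpos k hk)
  -- rewrite LHS
  rw [tension,
    Finset.sum_congr rfl (fun j hj => hd j (j + 2) (by omega)
      (by rw [Finset.mem_range] at hj; omega)),
    Finset.sum_congr rfl (fun j hj => hd (j + 1) (j + 2) (by omega)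
      (by rw [Finset.mem_range] at hj; omega)),
    hd 0 (m + 2) (by omega) le_rfl,
    sum_expand, sum_expand]
  -- rewrite RHS
  have hIcc : (∏ j ∈ Finset.Icc 1 m, gfun φ (t j) (t (j + 1)))
      = ∏ j ∈ Finset.range m, gfun φ (t (j + 1)) (t (j + 2)) := prod_shift m _
  have hnum : ∀ j ∈ Finset.range (m + 1), gfun φ (t j) (t (j + 2)) ≠ 0 := by
    intro j hj
    rw [Finset.mem_range] at hj
    exact (hgpos j (j + 2) (by omega) (by omega)).ne'
  have hden : ∀ j ∈ Finset.range m, gfun φ (t (j + 1)) (t (j + 2)) ≠ 0 := by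
    intro j hj
    rw [Finset.mem_range] at hj
    exact (hgpos (j + 1) (j + 2) (by omega) (by omega)).ne'
  have hnum0 : (0 : ℝ) < ∏ j ∈ Finset.range (m + 1), gfun φ (t j) (t (j + 2)) :=
    Finset.prod_pos fun j hj => lt_of_le_of_ne (le_of_lt (by
      rw [Finset.mem_range] at hj
      exact hgpos j (j + 2) (by omega) (by omega))) (Ne.symm (hnum j hj))
  have hden0 : (0 : ℝ) < ∏ j ∈ Finset.range m, gfun φ (t (j + 1)) (t (j + 2)) :=
    Finset.prod_pos fun j hj => by
      rw [Finset.mem_range] at hj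
      exact hgpos (j + 1) (j + 2) (by omega) (by omega)
  have hg0n : (0 : ℝ) < gfun φ (t 0) (t (m + 2)) := hgpos 0 (m + 2) (by omega) le_rfl
  rw [hIcc, Real.log_div hnum0.ne' (by positivity), Real.log_mul hg0n.ne' hden0.ne',
    Real.log_prod hnum, Real.log_prod hden]
  -- shift identities for the log t sums
  have hL1 : ∑ j ∈ Finset.range (m + 1), Real.log (t j)
      = (∑ j ∈ Finset.range m, Real.log (t (j + 1))) + Real.log (t 0) :=
    Finset.sum_range_succ' _ m
  have hL2 : ∑ j ∈ Finset.range (m + 1), Real.log (t (j + 2))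
      = (∑ j ∈ Finset.range m, Real.log (t (j + 2))) + Real.log (t (m + 2)) :=
    Finset.sum_range_succ _ m
  simp only [Finset.card_range]
  push_cast
  linarith [hL1, hL2]
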